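/- With p^m ≡ 3 (mod 4), α a nonzero non-square of F_{p^m}, β ≠ 0, α₀^{p^s} = α, and γ^4 = -4α₀: a nonzero linear polynomial cx + d with c ≠ 0, c, d ∈ F_{p^m}, is a unit in the ring 𝓡 = R[x]/⟨x^{4p^s} - (α+βu)⟩, where R = F_{p^m}[u]/⟨u²⟩. -/

import Mathlib

open Polynomial

/-- The chain ring `R = F_{p^m}[u]/⟨u²⟩`. -/
abbrev Ru (K : Type) [Field K] : Type := K[X] ⧸ Ideal.span {(X : K[X]) ^ 2}

/-- The element `u` of `R`. -/
noncomputable def uR (K : Type) [Field K] : Ru K :=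
  Ideal.Quotient.mk _ (X : K[X])

noncomputable instance instCommRingRu (K : Type) [Field K] : CommRing (Ru K) :=
  Ideal.Quotient.commRing _

/-- The natural inclusion of `F_{p^m}` into `R`. -/
noncomputable def tR (K : Type) [Field K] (a : K) : Ru K :=
  Ideal.Quotient.mk _ (C a : K[X])

/-- The ambient ring `R[x]/⟨xⁿ - λ⟩` of `λ`-constacyclic codes of length `n` over `R`. -/
abbrev RC (K : Type) [Field K] (lam : Ru K) (n : ℕ) : Type :=
  (Ru K)[X] ⧸ Ideal.span {(X : (Ru K)[X]) ^ n - C lam}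

/-- The canonical projection `R[x] → R[x]/⟨xⁿ - λ⟩`. -/
noncomputable def mkC (K : Type) [Field K] (lam : Ru K) (n : ℕ) :
    (Ru K)[X] →+* RC K lam n :=
  Ideal.Quotient.mk _

/-- `tR` as a ring hom. -/
noncomputable def tRhom (K : Type) [Field K] : K →+* Ru K :=
  (Ideal.Quotient.mk _).comp (C : K →+* K[X])

lemma tR_eq (K : Type) [Field K] (a : K) : tR K a = tRhom K a := rfl

lemma uR_sq (K : Type) [Field K] : uR K * uR K = 0 := by
  show Ideal.Quotient.mk _ (X : K[X]) * Ideal.Quotient.mk _ (X : K[X]) = 0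
  rw [← map_mul, Ideal.Quotient.eq_zero_iff_mem, ← sq]
  exact Ideal.mem_span_singleton_self _

lemma tR_isUnit (K : Type) [Field K] {a : K} (ha : a ≠ 0) : IsUnit (tR K a) := by
  rw [isUnit_iff_exists_inv]
  exact ⟨tR K a⁻¹, by rw [tR_eq, tR_eq, ← map_mul, mul_inv_cancel₀ ha, map_one]⟩

lemma Ru_isUnit (K : Type) [Field K] {a : K} (ha : a ≠ 0) (b : K) :
    IsUnit (tR K a + tR K b * uR K) := by
  have hnil : IsNilpotent (tR K b * uR K) := by
    refine ⟨2, ?_⟩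
    rw [sq, mul_mul_mul_comm, uR_sq, mul_zero]
  exact hnil.isUnit_add_left_of_commute (tR_isUnit K ha) (Commute.all _ _)

theorem stmt10 (p s m : ℕ) (hp : p.Prime) (hodd : Odd p) (hs : 0 < s) (hm : 0 < m)
    (K : Type) [Field K] [Fintype K] (hK : Fintype.card K = p ^ m)
    (h3 : p ^ m % 4 = 3) (α β : K) (hα : α ≠ 0) (hns : ¬ IsSquare α) (hβ : β ≠ 0)
    (α₀ : K) (hα₀ : α₀ ^ p ^ s = α) (γ : K) (hγ : γ ^ 4 = -4 * α₀)
    (c d : K) (hc : c ≠ 0) :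
    IsUnit (mkC K (tR K α + tR K β * uR K) (4 * p ^ s)
      (C (tR K c) * X + C (tR K d))) := by
  set n := 4 * p ^ s with hn
  set lam : Ru K := tR K α + tR K β * uR K with hlam
  set a : K := -c⁻¹ * d with ha
  -- factorization
  have hca : tR K c * tR K a = -(tR K d) := by
    rw [tR_eq, tR_eq, tR_eq, ← map_mul, ← map_neg]
    congr 1
    rw [ha]
    field_simp
  have hfac : C (tR K c) * (X - C (tR K a)) = C (tR K c) * X + C (tR K d) := by
    rw [mul_sub, ← C_mul, hca, map_neg, sub_neg_eq_add]
  -- X^n = C lam in the quotient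
  have hXn : mkC K lam n (X ^ n) = mkC K lam n (C lam) := by
    rw [← sub_eq_zero, ← map_sub]
    exact Ideal.Quotient.eq_zero_iff_mem.mpr (Ideal.mem_span_singleton_self _)
  -- the constant lam - tR (a^n) is a unit
  have hane : α - a ^ n ≠ 0 := by
    intro h
    apply hns
    have : α = (a ^ (2 * p ^ s)) ^ 2 := by
      rw [← pow_mul, ← sub_eq_zero]
      convert h using 3
      ring
    exact ⟨a ^ (2 * p ^ s), by rw [this, sq]⟩
  have hr : IsUnit (lam - tR K (a ^ n)) := by
    have : lam - tR K (a ^ n) = tR K (α - a ^ n) + tR K β * uR K := by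
      simp only [hlam, tR_eq, map_sub]
      ring
    rw [this]
    exact Ru_isUnit K hane β
  -- divisibility
  have hdvd : (X - C (tR K a)) ∣ (X ^ n - C (tR K (a ^ n))) := by
    have := sub_dvd_pow_sub_pow (X : (Ru K)[X]) (C (tR K a)) n
    rwa [show tR K (a ^ n) = (tR K a) ^ n by rw [tR_eq, tR_eq, map_pow], C_pow]
  have hdvd2 : mkC K lam n (X - C (tR K a)) ∣ mkC K lam n (C (lam - tR K (a ^ n))) := by
    have := map_dvd (mkC K lam n) hdvd
    rwa [map_sub (mkC K lam n) (X ^ n), hXn, ← map_sub (mkC K lam n), ← map_sub C] at this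
  have hu1 : IsUnit (mkC K lam n (X - C (tR K a))) :=
    isUnit_of_dvd_unit (α := RC K lam n) hdvd2 ((isUnit_C.mpr hr).map (mkC K lam n))
  have hu2 : IsUnit (mkC K lam n (C (tR K c))) :=
    (isUnit_C.mpr (tR_isUnit K hc)).map (mkC K lam n)
  rw [← hfac, map_mul]
  exact hu2.mul hu1
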